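/- Let G be a connected cograph on n vertices. Then G has a fixed-point-free involutionary automorphism if and only if G admits a weight-equitable partition into n/2 cells of size 2, which is moreover automatically equitable. -/
import Mathlib

set_option linter.unusedSectionVars false


open Finset Matrix

variable {V : Type*}

/-- The weight-intersection number `b*` of vertex `u` with respect to cell `D`,
for weight vector `ν`. -/
noncomputable def wInt [Fintype V] (G : SimpleGraph V) [DecidableRel G.Adj] (ν : V → ℝ)
    (D : Finset V) (u : V) : ℝ :=
  (∑ v ∈ D, if G.Adj u v then ν v else 0) / ν u

/-- `Vc` lists the cells of a partition of the vertex set. -/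
def IsPartition [Fintype V] {m : ℕ} (Vc : Fin m → Finset V) : Prop :=
  ∀ v : V, ∃! i : Fin m, v ∈ Vc i

/-- The partition with cells `Vc` is weight-equitable w.r.t. the weights `ν`. -/
def IsWeightEquitable [Fintype V] (G : SimpleGraph V) [DecidableRel G.Adj] (ν : V → ℝ)
    {m : ℕ} (Vc : Fin m → Finset V) : Prop :=
  ∀ i j : Fin m, ∀ u ∈ Vc i, ∀ u' ∈ Vc i, wInt G ν (Vc j) u = wInt G ν (Vc j) u'

/-- The partition with cells `Vc` is equitable. -/
def IsEquitable [Fintype V] [DecidableEq V] (G : SimpleGraph V) [DecidableRel G.Adj]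
    {m : ℕ} (Vc : Fin m → Finset V) : Prop :=
  ∀ i j : Fin m, ∀ u ∈ Vc i, ∀ u' ∈ Vc i,
    ((Vc j).filter (fun v => G.Adj u v)).card = ((Vc j).filter (fun v => G.Adj u' v)).card

/-- A cograph: a simple graph with no induced path on four vertices. -/
def IsCograph (G : SimpleGraph V) : Prop :=
  ∀ a b c d : V, a ≠ b → a ≠ c → a ≠ d → b ≠ c → b ≠ d → c ≠ d →
    ¬(G.Adj a b ∧ G.Adj b c ∧ G.Adj c d ∧ ¬G.Adj a c ∧ ¬G.Adj b d ∧ ¬G.Adj a d)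

section Aux

variable [Fintype V] [DecidableEq V] {G : SimpleGraph V} [DecidableRel G.Adj]

private lemma wInt_pair (ν : V → ℝ) {w w' : V} (hww : w ≠ w') (u : V) :
    wInt G ν {w, w'} u =
      ((if G.Adj u w then ν w else 0) + (if G.Adj u w' then ν w' else 0)) / ν u := by
  rw [wInt, Finset.sum_pair hww]

private lemma card_filter_pair (p : V → Prop) [DecidablePred p] {w w' : V} (h : w ≠ w') :
    (({w, w'} : Finset V).filter p).card = (if p w then 1 else 0) + (if p w' then 1 else 0) := by
  by_cases h1 : p w <;> by_cases h2 : p w' <;>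
    simp [Finset.filter_insert, Finset.filter_singleton, h1, h2, h]

private lemma perron_invariant (hG : G.Connected) (ν : V → ℝ) (lam : ℝ)
    (hν : ∀ v, 0 < ν v) (heig : (G.adjMatrix ℝ).mulVec ν = lam • ν)
    (γ : G ≃g G) (hinv : ∀ v, γ (γ v) = v) : ∀ v, ν (γ v) = ν v := by
  have eig : ∀ v, ∑ z ∈ G.neighborFinset v, ν z = lam * ν v := by
    intro v
    have h := congrFun heig v
    simpa using h
  have sumγ : ∀ v, ∑ z ∈ G.neighborFinset v, ν (γ z) = lam * ν (γ v) := by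
    intro v
    rw [← eig (γ v)]
    refine Finset.sum_nbij' (fun z => γ z) (fun z => γ z) ?_ ?_ ?_ ?_ ?_
    · intro a ha
      rw [SimpleGraph.mem_neighborFinset] at ha ⊢
      exact γ.map_adj_iff.mpr ha
    · intro a ha
      rw [SimpleGraph.mem_neighborFinset] at ha ⊢
      have : G.Adj (γ v) (γ (γ a)) := by rwa [hinv a]
      exact γ.map_adj_iff.mp this
    · intro a _; exact hinv a
    · intro a _; exact hinv a
    · intro a _; rfl
  have : Nonempty V := hG.nonempty
  obtain ⟨u0, -, hmin⟩ :=
    Finset.exists_min_image Finset.univ (fun v => ν (γ v) / ν v) Finset.univ_nonempty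
  set c := ν (γ u0) / ν u0 with hc
  have hcpos : 0 < c := div_pos (hν _) (hν _)
  have hge : ∀ v, c * ν v ≤ ν (γ v) := by
    intro v
    have h1 := hmin v (Finset.mem_univ v)
    have h2 : c * ν v ≤ (ν (γ v) / ν v) * ν v :=
      mul_le_mul_of_nonneg_right h1 (hν v).le
    rwa [div_mul_cancel₀ _ (hν v).ne'] at h2
  have step : ∀ v, ν (γ v) = c * ν v → ∀ z ∈ G.neighborFinset v, ν (γ z) = c * ν z := by
    intro v hv
    have hsum : ∑ z ∈ G.neighborFinset v, c * ν z = ∑ z ∈ G.neighborFinset v, ν (γ z) := by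
      rw [sumγ v, hv, ← Finset.mul_sum, eig v]; ring
    intro z hz
    exact ((Finset.sum_eq_sum_iff_of_le (fun i _ => hge i)).mp hsum z hz).symm
  have hbase : ν (γ u0) = c * ν u0 := by
    rw [hc, div_mul_cancel₀ _ (hν u0).ne']
  have all : ∀ v, ν (γ v) = c * ν v := by
    have key : ∀ {a b : V}, G.Walk a b → ν (γ a) = c * ν a → ν (γ b) = c * ν b := by
      intro a b p
      induction p with
      | nil => exact id
      | @cons a1 x1 b1 h p ih =>
        intro ha
        exact ih (step _ ha _ ((G.mem_neighborFinset a1 x1).mpr h))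
    intro v
    obtain ⟨p⟩ := hG.preconnected u0 v
    exact key p hbase
  have hc2 : c * c = 1 := by
    have h1 := all u0
    have h2 := all (γ u0)
    rw [hinv u0] at h2
    have h3 : ν u0 = c * (c * ν u0) := by rw [← h1, h2]
    have := hν u0
    nlinarith
  have hc1 : c = 1 := by
    rcases mul_self_eq_one_iff.mp hc2 with h | h
    · exact h
    · exfalso; rw [h] at hcpos; linarith
  intro v
  rw [all v, hc1, one_mul]

end Aux

section Aux2
variable [Fintype V] [DecidableEq V] {G : SimpleGraph V} [DecidableRel G.Adj]

private lemma cross_pairs (hcog : IsCograph G) (ν : V → ℝ) (hν : ∀ v, 0 < ν v)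
    {u u' w w' : V} (huu : u ≠ u') (hww : w ≠ w')
    (hd1 : u ≠ w) (hd2 : u ≠ w') (hd3 : u' ≠ w) (hd4 : u' ≠ w')
    (hP : G.Adj u u' → ν u = ν u') (hQ : G.Adj w w' → ν w = ν w')
    (E1 : wInt G ν {w, w'} u = wInt G ν {w, w'} u')
    (E2 : wInt G ν {u, u'} w = wInt G ν {u, u'} w') :
    (G.Adj u w ↔ G.Adj u' w') ∧ (G.Adj u w' ↔ G.Adj u' w) := by
  rw [wInt_pair ν hww, wInt_pair ν hww, div_eq_div_iff (hν u).ne' (hν u').ne'] at E1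
  rw [wInt_pair ν huu, wInt_pair ν huu, div_eq_div_iff (hν w).ne' (hν w').ne'] at E2
  simp only [G.adj_comm w u, G.adj_comm w u', G.adj_comm w' u, G.adj_comm w' u'] at E2
  have pu := hν u; have pu' := hν u'; have pw := hν w; have pw' := hν w'
  by_cases ha : G.Adj u w <;> by_cases hb : G.Adj u w' <;>
    by_cases hc : G.Adj u' w <;> by_cases hd : G.Adj u' w' <;>
    simp only [ha, hb, hc, hd, if_true, if_false, iff_true, iff_false, zero_add, add_zero,
      zero_mul, mul_zero, and_self, not_true, not_false_iff] at E1 E2 ⊢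

  -- 1: edges uw, uw', u'w (d = 0)
  · exfalso
    by_cases huv : G.Adj u u'
    · rw [hP huv] at E1 E2; nlinarith [mul_pos pw' pu', mul_pos pw pu']
    by_cases hwv : G.Adj w w'
    · rw [hQ hwv] at E1 E2; nlinarith [mul_pos pu' pw', mul_pos pu pw']
    exact hcog w' u w u' (Ne.symm hd2) (Ne.symm hww) (Ne.symm hd4) hd1 huu (Ne.symm hd3)
      ⟨hb.symm, ha, hc.symm, fun h => hwv h.symm, huv, fun h => hd h.symm⟩
  -- 2: edges uw, uw', u'w' (c = 0)
  · exfalso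
    by_cases huv : G.Adj u u'
    · rw [hP huv] at E1 E2; nlinarith [mul_pos pw pu', mul_pos pw' pu']
    by_cases hwv : G.Adj w w'
    · rw [hQ hwv] at E1 E2; nlinarith [mul_pos pu' pw', mul_pos pu pw']
    exact hcog w u w' u' (Ne.symm hd1) hww (Ne.symm hd3) hd2 huu (Ne.symm hd4)
      ⟨ha.symm, hb, hd.symm, hwv, huv, fun h => hc h.symm⟩
  -- 3: edges uw, uw'
  · nlinarith [mul_pos (add_pos pw pw') pu']
  -- 4: edges uw, u'w, u'w' (b = 0)
  · exfalso
    by_cases huv : G.Adj u u'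
    · rw [hP huv] at E1 E2; nlinarith [mul_pos pw' pu', mul_pos pw pu']
    by_cases hwv : G.Adj w w'
    · rw [hQ hwv] at E1 E2; nlinarith [mul_pos pu pw', mul_pos pu' pw']
    exact hcog w' u' w u (Ne.symm hd4) (Ne.symm hww) (Ne.symm hd2) hd3 (Ne.symm huu)
      (Ne.symm hd1) ⟨hd.symm, hc, ha.symm, fun h => hwv h.symm, fun h => huv h.symm,
        fun h => hb h.symm⟩
  -- 5: edges uw, u'w
  · nlinarith [mul_pos (add_pos pu pu') pw']
  -- 6: edge uw
  · exfalso; nlinarith [mul_pos pw pu']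
  -- 7: edges uw', u'w, u'w' (a = 0)
  · exfalso
    by_cases huv : G.Adj u u'
    · rw [hP huv] at E1 E2; nlinarith [mul_pos pw pu', mul_pos pw' pu']
    by_cases hwv : G.Adj w w'
    · rw [hQ hwv] at E1 E2; nlinarith [mul_pos pu' pw', mul_pos pu pw']
    exact hcog u w' u' w hd2 huu hd1 (Ne.symm hd4) (Ne.symm hww) hd3
      ⟨hb, hd.symm, hc, huv, fun h => hwv h.symm, ha⟩
  -- 8: edges uw', u'w'
  · nlinarith [mul_pos (add_pos pu pu') pw]
  -- 9: edge uw'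
  · exfalso; nlinarith [mul_pos pw' pu']
  -- 10: edges u'w, u'w'
  · nlinarith [mul_pos (add_pos pw pw') pu]
  -- 11: edge u'w
  · exfalso; nlinarith [mul_pos pw pu]
  -- 12: edge u'w'
  · nlinarith [mul_pos pw' pu]

private lemma pairs_props (hcog : IsCograph G) (ν : V → ℝ) (hν : ∀ v, 0 < ν v)
    {m : ℕ} {Vc : Fin m → Finset V}
    (hpart : IsPartition Vc) (hc2 : ∀ i, (Vc i).card = 2) (hwe : IsWeightEquitable G ν Vc) :
    ∃ g : V → V, (∀ v, g v ≠ v) ∧ (∀ v, g (g v) = v) ∧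
      (∀ v i, v ∈ Vc i → Vc i = {v, g v}) ∧
      (∀ x y, G.Adj (g x) (g y) ↔ G.Adj x y) := by
  classical
  choose idx hmem huni using hpart
  have hcard1 : ∀ v : V, ((Vc (idx v)).erase v).card = 1 := by
    intro v
    rw [Finset.card_erase_of_mem (hmem v), hc2]
  choose g hg using fun v => Finset.card_eq_one.mp (hcard1 v)
  have hgerase : ∀ v, g v ∈ (Vc (idx v)).erase v := by
    intro v; rw [hg v]; exact Finset.mem_singleton_self _
  have hgne : ∀ v, g v ≠ v := fun v => (Finset.mem_erase.mp (hgerase v)).1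
  have hgmem : ∀ v, g v ∈ Vc (idx v) := fun v => Finset.mem_of_mem_erase (hgerase v)
  have hcell : ∀ v, Vc (idx v) = {v, g v} := by
    intro v
    rw [← Finset.insert_erase (hmem v), hg v]
  have hidxg : ∀ v, idx (g v) = idx v := fun v => (huni (g v) (idx v) (hgmem v)).symm
  have hgg : ∀ v, g (g v) = v := by
    intro v
    have h2 := hgerase (g v)
    rw [hidxg v, hcell v] at h2
    obtain ⟨hne, hmem2⟩ := Finset.mem_erase.mp h2
    rcases Finset.mem_insert.mp hmem2 with h | h
    · exact h
    · exact absurd (Finset.mem_singleton.mp h) hne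
  have hcellmem : ∀ v i, v ∈ Vc i → Vc i = {v, g v} := by
    intro v i hv
    rw [huni v i hv]
    exact hcell v
  have hsame : ∀ v, G.Adj v (g v) → ν v = ν (g v) := by
    intro v hadj
    have E := hwe (idx v) (idx v) v (hmem v) (g v) (hgmem v)
    rw [hcell v, wInt_pair ν (Ne.symm (hgne v)), wInt_pair ν (Ne.symm (hgne v))] at E
    simp only [G.irrefl, if_false, hadj, hadj.symm, if_true, zero_add, add_zero] at E
    rw [div_eq_div_iff (hν v).ne' (hν (g v)).ne'] at E
    nlinarith [hν v, hν (g v)]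
  have hne_cross : ∀ x y : V, idx x ≠ idx y → x ≠ y := by
    intro x y hne heq
    exact hne (by rw [heq])
  have hcross : ∀ x y, idx x ≠ idx y →
      (G.Adj x y ↔ G.Adj (g x) (g y)) ∧ (G.Adj x (g y) ↔ G.Adj (g x) y) := by
    intro x y hne
    have h2 : idx x ≠ idx (g y) := by rw [hidxg]; exact hne
    have h3 : idx (g x) ≠ idx y := by rw [hidxg]; exact hne
    have h4 : idx (g x) ≠ idx (g y) := by rw [hidxg, hidxg]; exact hne
    have E1 := hwe (idx x) (idx y) x (hmem x) (g x) (hgmem x)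
    have E2 := hwe (idx y) (idx x) y (hmem y) (g y) (hgmem y)
    rw [hcell y] at E1
    rw [hcell x] at E2
    exact cross_pairs hcog ν hν (Ne.symm (hgne x)) (Ne.symm (hgne y))
      (hne_cross x y hne) (hne_cross x (g y) h2) (hne_cross (g x) y h3)
      (hne_cross (g x) (g y) h4) (hsame x) (hsame y) E1 E2
  have adjmono : ∀ x y, G.Adj x y → G.Adj (g x) (g y) := by
    intro x y hxy
    by_cases h : idx x = idx y
    · have hy : y ∈ Vc (idx x) := by rw [h]; exact hmem y
      rw [hcell x] at hy
      rcases Finset.mem_insert.mp hy with h' | h'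
      · exact absurd h'.symm hxy.ne
      · rw [Finset.mem_singleton] at h'
        subst h'
        rw [hgg x]
        exact hxy.symm
    · exact ((hcross x y h).1).mp hxy
  refine ⟨g, hgne, hgg, hcellmem, fun x y => ⟨fun h => ?_, adjmono x y⟩⟩
  have := adjmono _ _ h
  rwa [hgg, hgg] at this

private lemma exists_partition_of_involution (hG : G.Connected) (ν : V → ℝ) (lam : ℝ)
    (hν : ∀ v, 0 < ν v) (heig : (G.adjMatrix ℝ).mulVec ν = lam • ν)
    (γ : G ≃g G) (hfpf : ∀ v, γ v ≠ v) (hinv : ∀ v, γ (γ v) = v) :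
    ∃ (m : ℕ) (Vc : Fin m → Finset V), 2 * m = Fintype.card V ∧
      IsPartition Vc ∧ (∀ i, (Vc i).card = 2) ∧ IsWeightEquitable G ν Vc := by
  classical
  have hνγ := perron_invariant hG ν lam hν heig γ hinv
  set O : Finset (Finset V) := Finset.univ.image (fun v => ({v, γ v} : Finset V)) with hO
  have horb : ∀ v : V, ({γ v, γ (γ v)} : Finset V) = {v, γ v} := by
    intro v; rw [hinv v, Finset.pair_comm]
  have hmemO : ∀ v : V, ({v, γ v} : Finset V) ∈ O :=
    fun v => Finset.mem_image_of_mem _ (Finset.mem_univ v)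
  have hpairmem : ∀ z v : V, v ∈ ({z, γ z} : Finset V) → ({z, γ z} : Finset V) = {v, γ v} := by
    intro z v hv
    rcases Finset.mem_insert.mp hv with rfl | hv
    · rfl
    · rw [Finset.mem_singleton] at hv; subst hv; exact (horb z).symm
  have hfiber : ∀ o ∈ O, Finset.univ.filter (fun z => ({z, γ z} : Finset V) = o) = o := by
    intro o ho
    obtain ⟨v, -, rfl⟩ := Finset.mem_image.mp ho
    ext z
    simp only [Finset.mem_filter, Finset.mem_univ, true_and]
    constructor
    · intro h; rw [← h]; exact Finset.mem_insert_self _ _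
    · intro h; exact (hpairmem v z h).symm
  have hcard2 : ∀ o ∈ O, o.card = 2 := by
    intro o ho; obtain ⟨v, -, rfl⟩ := Finset.mem_image.mp ho
    exact Finset.card_pair (Ne.symm (hfpf v))
  have hcardO : 2 * O.card = Fintype.card V := by
    have h1 := Finset.card_eq_sum_card_fiberwise
      (f := fun v : V => ({v, γ v} : Finset V)) (s := Finset.univ) (t := O)
      (fun v _ => hmemO v)
    rw [Finset.card_univ] at h1
    rw [h1, Finset.sum_congr rfl (fun o ho => by rw [hfiber o ho, hcard2 o ho]),
      Finset.sum_const, smul_eq_mul, mul_comm]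
  let e : Fin O.card ≃ {o // o ∈ O} := (Fintype.equivFinOfCardEq (Fintype.card_coe O)).symm
  have hVcO : ∀ i, ((e i : Finset V)) ∈ O := fun i => (e i).2
  refine ⟨O.card, fun i => (e i : Finset V), hcardO, ?_, fun i => hcard2 _ (hVcO i), ?_⟩
  · intro v
    refine ⟨e.symm ⟨{v, γ v}, hmemO v⟩, ?_, ?_⟩
    · show v ∈ ((e (e.symm ⟨{v, γ v}, hmemO v⟩) : Finset V))
      rw [Equiv.apply_symm_apply]
      exact Finset.mem_insert_self _ _
    · intro j hj
      have hj' : v ∈ (e j : Finset V) := hj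
      obtain ⟨z, -, hz⟩ := Finset.mem_image.mp (hVcO j)
      have hEq : (e j : Finset V) = {v, γ v} := by
        rw [← hz] at hj' ⊢
        exact hpairmem z v hj'
      have : e j = (⟨{v, γ v}, hmemO v⟩ : {o // o ∈ O}) := Subtype.ext hEq
      rw [← this, Equiv.symm_apply_apply]
  · intro i j x hx y hy
    have hx' : x ∈ (e i : Finset V) := hx
    have hy' : y ∈ (e i : Finset V) := hy
    obtain ⟨z, -, hz⟩ := Finset.mem_image.mp (hVcO i)
    obtain ⟨w, -, hw⟩ := Finset.mem_image.mp (hVcO j)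
    have main : ∀ u : V, wInt G ν (e j : Finset V) (γ u) = wInt G ν (e j : Finset V) u := by
      intro u
      rw [← hw, wInt_pair ν (Ne.symm (hfpf w)), wInt_pair ν (Ne.symm (hfpf w))]
      have h1 : G.Adj (γ u) w ↔ G.Adj u (γ w) := by
        conv_lhs => rw [← hinv w]
        exact γ.map_adj_iff
      have h2 : G.Adj (γ u) (γ w) ↔ G.Adj u w := γ.map_adj_iff
      rw [hνγ u, hνγ w]
      by_cases hA : G.Adj u w <;> by_cases hB : G.Adj u (γ w) <;>
        simp [h1, h2, hA, hB, add_comm]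
    have hxy : y = x ∨ y = γ x := by
      rw [← hz] at hx' hy'
      simp only [Finset.mem_insert, Finset.mem_singleton] at hx' hy'
      rcases hx' with rfl | rfl <;> rcases hy' with rfl | rfl
      · exact Or.inl rfl
      · exact Or.inr rfl
      · exact Or.inr (hinv _).symm
      · exact Or.inl rfl
    rcases hxy with rfl | rfl
    · rfl
    · exact (main x).symm

end Aux2

/-- A connected cograph has a fixed-point-free involutionary automorphism iff it admits a
weight-equitable partition into `n/2` cells of size `2`; moreover any such partition is
automatically equitable. -/
theorem cograph_fixedPointFree_involution_iff_weightEquitable_pairs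
    [Fintype V] [DecidableEq V] (G : SimpleGraph V) [DecidableRel G.Adj]
    (hG : G.Connected) (hcog : IsCograph G)
    (ν : V → ℝ) (lam : ℝ)
    (hν : ∀ v, 0 < ν v)
    (heig : (G.adjMatrix ℝ).mulVec ν = lam • ν) :
    ((∃ γ : G ≃g G, (∀ v, γ v ≠ v) ∧ (∀ v, γ (γ v) = v)) ↔
      ∃ (m : ℕ) (Vc : Fin m → Finset V), 2 * m = Fintype.card V ∧
        IsPartition Vc ∧ (∀ i, (Vc i).card = 2) ∧ IsWeightEquitable G ν Vc) ∧
    (∀ (m : ℕ) (Vc : Fin m → Finset V), 2 * m = Fintype.card V →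
      IsPartition Vc → (∀ i, (Vc i).card = 2) → IsWeightEquitable G ν Vc →
        IsEquitable G Vc) := by
  classical
  constructor
  · constructor
    · rintro ⟨γ, hfpf, hinv⟩
      exact exists_partition_of_involution hG ν lam hν heig γ hfpf hinv
    · rintro ⟨m, Vc, hm, hpart, hc2, hwe⟩
      obtain ⟨g, hgne, hgg, hcell, hiff⟩ := pairs_props hcog ν hν hpart hc2 hwe
      exact ⟨⟨Function.Involutive.toPerm g hgg, fun {a b} => hiff a b⟩, hgne, hgg⟩
  · intro m Vc hm hpart hc2 hwe
    obtain ⟨g, hgne, hgg, hcell, hiff⟩ := pairs_props hcog ν hν hpart hc2 hwe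
    intro i j x hx y hy
    by_cases hxy : x = y
    · subst hxy; rfl
    have hVi : Vc i = {x, g x} := hcell x i hx
    have hyx : y = g x := by
      rw [hVi] at hy
      rcases Finset.mem_insert.mp hy with h | h
      · exact absurd h.symm hxy
      · exact Finset.mem_singleton.mp h
    subst hyx
    obtain ⟨w, hw⟩ := Finset.card_pos.mp (by rw [hc2 j]; norm_num : 0 < (Vc j).card)
    have hVj : Vc j = {w, g w} := hcell w j hw
    have h1 : G.Adj x w ↔ G.Adj (g x) (g w) := (hiff x w).symm
    have h2 : G.Adj x (g w) ↔ G.Adj (g x) w := by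
      conv_rhs => rw [← hgg w]
      exact (hiff x (g w)).symm
    rw [hVj, card_filter_pair _ (Ne.symm (hgne w)), card_filter_pair _ (Ne.symm (hgne w))]
    rw [if_congr h1 rfl rfl, if_congr h2 rfl rfl, add_comm]
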